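/- For every x̄, p̄ ∈ ℝ^n, if (λ₁, w₁) and (λ₂, w₂) are both classical solutions of the critical cell problem at (x̄, p̄), then λ₁ = λ₂. -/

import Mathlib

open Matrix MeasureTheory Set

noncomputable section

/-- Euclidean norm of a vector in `ℝ^k`. -/
def en {k : ℕ} (v : Fin k → ℝ) : ℝ := Real.sqrt (v ⬝ᵥ v)

/-- Squared Euclidean norm. -/
def sq2 {k : ℕ} (v : Fin k → ℝ) : ℝ := v ⬝ᵥ v

/-- Partial derivative in the `i`-th coordinate direction. -/
def pd {m : ℕ} (w : (Fin m → ℝ) → ℝ) (i : Fin m) (y : Fin m → ℝ) : ℝ :=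
  fderiv ℝ w y (Pi.single i 1)

/-- Gradient. -/
def vgrad {m : ℕ} (w : (Fin m → ℝ) → ℝ) (y : Fin m → ℝ) : Fin m → ℝ := fun i => pd w i y

/-- Hessian matrix. -/
def vhess {m : ℕ} (w : (Fin m → ℝ) → ℝ) (y : Fin m → ℝ) : Matrix (Fin m) (Fin m) ℝ :=
  Matrix.of fun i j => pd (pd w j) i y

/-- `ℤ^m`-periodicity. -/
def ZPer {m : ℕ} (w : (Fin m → ℝ) → ℝ) : Prop :=
  ∀ (y : Fin m → ℝ) (k : Fin m → ℤ), w (y + fun i => (k i : ℝ)) = w y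

/-- Standing hypotheses on the data. -/
structure StandingHyp {n m r : ℕ}
    (σ : (Fin n → ℝ) → (Fin m → ℝ) → Matrix (Fin n) (Fin r) ℝ)
    (b : (Fin m → ℝ) → Fin m → ℝ)
    (τ : (Fin m → ℝ) → Matrix (Fin m) (Fin r) ℝ) : Prop where
  σ_bdd : ∃ C : ℝ, ∀ x y i j, |σ x y i j| ≤ C
  σ_lip : ∃ L : ℝ, ∀ x x' y y' i j, |σ x y i j - σ x' y' i j| ≤ L * (en (x - x') + en (y - y'))
  σ_per : ∀ x y (k : Fin m → ℤ), σ x (y + fun l => (k l : ℝ)) = σ x y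
  b_lip : ∃ L : ℝ, ∀ y y' i, |b y i - b y' i| ≤ L * en (y - y')
  b_per : ∀ y (k : Fin m → ℤ), b (y + fun l => (k l : ℝ)) = b y
  τ_lip : ∃ L : ℝ, ∀ y y' i j, |τ y i j - τ y' i j| ≤ L * en (y - y')
  τ_per : ∀ y (k : Fin m → ℤ), τ (y + fun l => (k l : ℝ)) = τ y
  τ_nondeg : ∃ θ : ℝ, 0 < θ ∧ ∀ y ξ, θ * sq2 ξ ≤ sq2 ((τ y)ᵀ *ᵥ ξ)

/-- Classical solution of the critical cell problem at `(x, p)`. -/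
def IsCriticalSol {n m r : ℕ}
    (σ : (Fin n → ℝ) → (Fin m → ℝ) → Matrix (Fin n) (Fin r) ℝ)
    (b : (Fin m → ℝ) → Fin m → ℝ)
    (τ : (Fin m → ℝ) → Matrix (Fin m) (Fin r) ℝ)
    (x p : Fin n → ℝ) (lam : ℝ) (w : (Fin m → ℝ) → ℝ) : Prop :=
  ContDiff ℝ 2 w ∧ ZPer w ∧
    ∀ y, lam = sq2 ((σ x y)ᵀ *ᵥ p)
        + 2 * ((τ y *ᵥ ((σ x y)ᵀ *ᵥ p)) ⬝ᵥ vgrad w y)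
        + b y ⬝ᵥ vgrad w y
        + sq2 ((τ y)ᵀ *ᵥ vgrad w y)
        + Matrix.trace (τ y * (τ y)ᵀ * vhess w y)

/-- Classical solution of the supercritical cell problem at `(x, p)`. -/
def IsSupercriticalSol {n m r : ℕ}
    (σ : (Fin n → ℝ) → (Fin m → ℝ) → Matrix (Fin n) (Fin r) ℝ)
    (b : (Fin m → ℝ) → Fin m → ℝ)
    (τ : (Fin m → ℝ) → Matrix (Fin m) (Fin r) ℝ)
    (x p : Fin n → ℝ) (lam : ℝ) (w : (Fin m → ℝ) → ℝ) : Prop :=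
  ContDiff ℝ 2 w ∧ ZPer w ∧
    ∀ y, lam = sq2 ((σ x y)ᵀ *ᵥ p) + b y ⬝ᵥ vgrad w y
        + Matrix.trace (τ y * (τ y)ᵀ * vhess w y)

/-- Classical solution of the subcritical cell problem at `(x, p)`. -/
def IsSubcriticalSol {n m r : ℕ}
    (σ : (Fin n → ℝ) → (Fin m → ℝ) → Matrix (Fin n) (Fin r) ℝ)
    (τ : (Fin m → ℝ) → Matrix (Fin m) (Fin r) ℝ)
    (x p : Fin n → ℝ) (lam : ℝ) (w : (Fin m → ℝ) → ℝ) : Prop :=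
  ContDiff ℝ 1 w ∧ ZPer w ∧
    ∀ y, lam = sq2 ((τ y)ᵀ *ᵥ vgrad w y + (σ x y)ᵀ *ᵥ p)


lemma clm_apply_sum {m : ℕ} (L : (Fin m → ℝ) →L[ℝ] ℝ) (ξ : Fin m → ℝ) :
    L ξ = ∑ j, ξ j * L (Pi.single j 1) := by
  have h : ξ = ∑ j, ξ j • (Pi.single j 1 : Fin m → ℝ) := by
    ext i
    simp [Pi.single_apply, Finset.sum_apply]
  rw [show L ξ = L (∑ j, ξ j • (Pi.single j 1 : Fin m → ℝ)) by rw [← h]]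
  rw [map_sum]
  simp [smul_eq_mul]

lemma hasDerivAt_line {m : ℕ} (f : (Fin m → ℝ) → ℝ) (hf : Differentiable ℝ f)
    (y₀ ξ : Fin m → ℝ) (t : ℝ) :
    HasDerivAt (fun s => f (y₀ + s • ξ)) (∑ j, ξ j * pd f j (y₀ + t • ξ)) t := by
  have hline : HasDerivAt (fun s : ℝ => y₀ + s • ξ) ξ t := by
    simpa using ((hasDerivAt_id t).smul_const ξ).const_add y₀
  have hF := (hf (y₀ + t • ξ)).hasFDerivAt
  have h := hF.comp_hasDerivAt t hline
  have hv : (fderiv ℝ f (y₀ + t • ξ)) ξ = ∑ j, ξ j * pd f j (y₀ + t • ξ) :=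
    clm_apply_sum _ _
  rw [hv] at h
  exact h

lemma pd_contDiff {m : ℕ} {w : (Fin m → ℝ) → ℝ} (hw : ContDiff ℝ 2 w) (j : Fin m) :
    ContDiff ℝ 1 (pd w j) := by
  have h1 : ContDiff ℝ 1 (fderiv ℝ w) := hw.fderiv_right (by norm_num)
  exact h1.clm_apply contDiff_const

lemma quad_nonpos (f G : ℝ → ℝ) (Q : ℝ)
    (hg : ∀ t, HasDerivAt f (G t) t) (hG0 : G 0 = 0)
    (hQ : HasDerivAt G Q 0) (hmax : ∀ t, f t ≤ f 0) : Q ≤ 0 := by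
  by_contra hpos
  push_neg at hpos
  have hslope := hasDerivAt_iff_tendsto_slope.mp hQ
  have hev : ∀ᶠ t in nhdsWithin (0:ℝ) {(0:ℝ)}ᶜ, 0 < slope G 0 t :=
    hslope.eventually (eventually_gt_nhds hpos)
  have hev' : ∀ᶠ t in nhdsWithin (0:ℝ) (Ioi 0), 0 < slope G 0 t :=
    hev.filter_mono (nhdsWithin_mono _ (fun x hx => by simpa using ne_of_gt hx))
  obtain ⟨s, hs, hsub⟩ := hev'.exists_mem
  obtain ⟨u, hu, hIoc⟩ := mem_nhdsGT_iff_exists_Ioc_subset.mp hs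
  have hGpos : ∀ t ∈ Ioc (0:ℝ) u, 0 < G t := by
    intro t ht
    have := hsub t (hIoc ht)
    rw [slope_def_field] at this
    have ht0 : 0 < t := ht.1
    have : 0 < (G t - G 0) / (t - 0) := this
    rw [hG0, sub_zero, sub_zero] at this
    exact (div_pos_iff.mp this).resolve_right (fun h => absurd ht0 (not_lt.mpr h.2.le)) |>.1
  have hmono : StrictMonoOn f (Icc 0 u) := by
    apply strictMonoOn_of_deriv_pos (convex_Icc 0 u)
    · exact fun t _ => ((hg t).differentiableAt.continuousAt).continuousWithinAt
    · intro t ht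
      rw [interior_Icc] at ht
      rw [(hg t).deriv]
      exact hGpos t ⟨ht.1, ht.2.le⟩
  have h01 : f 0 < f u := hmono ⟨le_rfl, le_of_lt hu⟩ ⟨le_of_lt hu, le_rfl⟩ hu
  exact absurd (hmax u) (not_le.mpr h01)

lemma exists_global_max {m : ℕ} (v : (Fin m → ℝ) → ℝ) (hc : Continuous v)
    (hper : ∀ (y : Fin m → ℝ) (k : Fin m → ℤ), v (y + fun i => (k i : ℝ)) = v y) :
    ∃ y₀, ∀ y, v y ≤ v y₀ := by
  have hne : (Icc (0 : Fin m → ℝ) 1).Nonempty := ⟨0, mem_Icc.mpr ⟨le_rfl, fun i => zero_le_one⟩⟩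
  obtain ⟨y₀, _, hy₀⟩ := isCompact_Icc.exists_isMaxOn hne hc.continuousOn
  refine ⟨y₀, fun y => ?_⟩
  set y' : Fin m → ℝ := fun i => Int.fract (y i) with hy'
  have hk : y = y' + fun i => ((⌊y i⌋ : ℤ) : ℝ) := by
    funext i
    exact (Int.fract_add_floor (y i)).symm
  have hvy : v y = v y' := by rw [hk]; exact hper y' _
  rw [hvy]
  exact isMaxOn_iff.mp hy₀ y' (mem_Icc.mpr ⟨fun i => Int.fract_nonneg _, fun i => (Int.fract_lt_one _).le⟩)

lemma trace_AAtH {m r : ℕ} (A : Matrix (Fin m) (Fin r) ℝ) (H : Matrix (Fin m) (Fin m) ℝ) :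
    Matrix.trace (A * Aᵀ * H) = ∑ j : Fin r, ∑ c, A c j * ∑ i, A i j * H i c := by
  have h1 : Matrix.trace (A * Aᵀ * H) = ∑ a, ∑ b, ∑ j, A a j * A b j * H b a := by
    simp [Matrix.trace, Matrix.diag, Matrix.mul_apply, Finset.sum_mul]
  rw [h1]
  have h2 : ∀ a : Fin m, (∑ b, ∑ j, A a j * A b j * H b a) = ∑ j, ∑ b, A a j * A b j * H b a :=
    fun a => Finset.sum_comm
  simp only [h2]
  rw [Finset.sum_comm]
  refine Finset.sum_congr rfl fun j _ => ?_
  refine Finset.sum_congr rfl fun c _ => ?_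
  rw [Finset.mul_sum]
  refine Finset.sum_congr rfl fun i _ => ?_
  ring

lemma key_le {n m r : ℕ}
    (σ : (Fin n → ℝ) → (Fin m → ℝ) → Matrix (Fin n) (Fin r) ℝ)
    (b : (Fin m → ℝ) → Fin m → ℝ)
    (τ : (Fin m → ℝ) → Matrix (Fin m) (Fin r) ℝ)
    (xbar pbar : Fin n → ℝ)
    (lam₁ lam₂ : ℝ) (w₁ w₂ : (Fin m → ℝ) → ℝ)
    (h₁ : IsCriticalSol σ b τ xbar pbar lam₁ w₁)
    (h₂ : IsCriticalSol σ b τ xbar pbar lam₂ w₂) : lam₁ ≤ lam₂ := by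
  obtain ⟨hw₁, hper₁, heq₁⟩ := h₁
  obtain ⟨hw₂, hper₂, heq₂⟩ := h₂
  set v : (Fin m → ℝ) → ℝ := fun y => w₁ y - w₂ y with hv_def
  have hv : ContDiff ℝ 2 v := hw₁.sub hw₂
  have hdv : Differentiable ℝ v := hv.differentiable two_ne_zero
  have hd₁ : Differentiable ℝ w₁ := hw₁.differentiable two_ne_zero
  have hd₂ : Differentiable ℝ w₂ := hw₂.differentiable two_ne_zero
  have hperv : ∀ (y : Fin m → ℝ) (k : Fin m → ℤ), v (y + fun i => (k i : ℝ)) = v y :=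
    fun y k => by simp [hv_def, hper₁ y k, hper₂ y k]
  obtain ⟨y₀, hmax⟩ := exists_global_max v hv.continuous hperv
  have hloc : IsLocalMax v y₀ := Filter.Eventually.of_forall hmax
  have hfd0 : fderiv ℝ v y₀ = 0 := hloc.fderiv_eq_zero
  have hpdv : ∀ (j : Fin m) (y : Fin m → ℝ), pd v j y = pd w₁ j y - pd w₂ j y := by
    intro j y
    simp only [pd, hv_def]
    rw [fderiv_fun_sub (hd₁ y) (hd₂ y)]
    simp
  have hgrad0 : ∀ j, pd v j y₀ = 0 := fun j => by simp [pd, hfd0]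
  have hge : vgrad w₁ y₀ = vgrad w₂ y₀ := by
    funext j
    have h := hgrad0 j
    rw [hpdv j y₀] at h
    simpa [vgrad] using sub_eq_zero.mp h
  have hpd1 : ∀ j, Differentiable ℝ (pd w₁ j) := fun j => (pd_contDiff hw₁ j).differentiable one_ne_zero
  have hpd2 : ∀ j, Differentiable ℝ (pd w₂ j) := fun j => (pd_contDiff hw₂ j).differentiable one_ne_zero
  have hpdvd : ∀ j, Differentiable ℝ (pd v j) := by
    intro j
    have hfun : pd v j = fun y => pd w₁ j y - pd w₂ j y := funext (hpdv j)
    rw [hfun]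
    exact (hpd1 j).sub (hpd2 j)
  have hHv : ∀ i j, pd (pd v j) i y₀ = pd (pd w₁ j) i y₀ - pd (pd w₂ j) i y₀ := by
    intro i j
    have hfun : pd v j = fun y => pd w₁ j y - pd w₂ j y := funext (hpdv j)
    rw [hfun]
    show fderiv ℝ (fun y => pd w₁ j y - pd w₂ j y) y₀ (Pi.single i 1) = _
    rw [fderiv_fun_sub (hpd1 j y₀) (hpd2 j y₀)]
    rfl
  have hNSD : ∀ ξ : Fin m → ℝ, (∑ j, ξ j * ∑ i, ξ i * pd (pd v j) i y₀) ≤ 0 := by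
    intro ξ
    apply quad_nonpos (fun t => v (y₀ + t • ξ)) (fun t => ∑ j, ξ j * pd v j (y₀ + t • ξ))
    · intro t; exact hasDerivAt_line v hdv y₀ ξ t
    · simp [hgrad0]
    · have hterm : ∀ j ∈ Finset.univ, HasDerivAt (fun t => ξ j * pd v j (y₀ + t • ξ))
          (ξ j * ∑ i, ξ i * pd (pd v j) i y₀) (0 : ℝ) := by
        intro j _
        have h := (hasDerivAt_line (pd v j) (hpdvd j) y₀ ξ 0).const_mul (ξ j)
        simpa using h
      have hs := HasDerivAt.fun_sum hterm
      simpa using hs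
    · intro t; simpa using hmax (y₀ + t • ξ)
  have e1 := heq₁ y₀
  have e2 := heq₂ y₀
  rw [hge] at e1
  have hd : lam₁ - lam₂ = Matrix.trace (τ y₀ * (τ y₀)ᵀ * vhess w₁ y₀)
      - Matrix.trace (τ y₀ * (τ y₀)ᵀ * vhess w₂ y₀) := by rw [e1, e2]; ring
  have hHveq : vhess w₁ y₀ - vhess w₂ y₀ = vhess v y₀ := by
    ext i j
    simp [vhess, hHv i j]
  have htr : lam₁ - lam₂ = Matrix.trace (τ y₀ * (τ y₀)ᵀ * vhess v y₀) := by
    rw [hd, ← Matrix.trace_sub, ← Matrix.mul_sub, hHveq]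
  rw [trace_AAtH] at htr
  have hle : (∑ j : Fin r, ∑ c, τ y₀ c j * ∑ i, τ y₀ i j * vhess v y₀ i c) ≤ 0 := by
    apply Finset.sum_nonpos
    intro j _
    have h := hNSD (fun i => τ y₀ i j)
    simpa [vhess] using h
  linarith

/-- uniqueness of the additive eigenvalue in the critical cell problem. -/
theorem stmt1 {n m r : ℕ}
    (σ : (Fin n → ℝ) → (Fin m → ℝ) → Matrix (Fin n) (Fin r) ℝ)
    (b : (Fin m → ℝ) → Fin m → ℝ)
    (τ : (Fin m → ℝ) → Matrix (Fin m) (Fin r) ℝ)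
    (hyp : StandingHyp σ b τ)
    (xbar pbar : Fin n → ℝ)
    (lam₁ lam₂ : ℝ) (w₁ w₂ : (Fin m → ℝ) → ℝ)
    (h₁ : IsCriticalSol σ b τ xbar pbar lam₁ w₁)
    (h₂ : IsCriticalSol σ b τ xbar pbar lam₂ w₂) :
    lam₁ = lam₂ :=
  le_antisymm (key_le σ b τ xbar pbar lam₁ lam₂ w₁ w₂ h₁ h₂)
    (key_le σ b τ xbar pbar lam₂ lam₁ w₂ w₁ h₂ h₁)

end
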